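/- Let m ≥ 2 and let X_1,…,X_m be random variables on a common probability space, each taking finitely many values, satisfying H(X_{K∪{i}}) + H(X_{K∪{j}}) = H(X_K) + H(X_{K∪{i,j}}) for all distinct i, j ∈ {1,…,m} and all K ⊆ {1,…,m} \ {i,j}. Suppose moreover that P(X_1 = x_1) = P(X_2 = x_2) = … = P(X_m = x_m) for every (x_1,…,x_m) with P(X_1 = x_1, …, X_m = x_m) > 0. Form the m-partite graph whose vertices are the pairs (i, x) with P(X_i = x) > 0, with an edge between (i, x) and (j, y) for i ≠ j if and only if P(X_i = x, X_j = y) > 0. Then the supports of X_1,…,X_m all have the same cardinality, and any two vertices (i, x) and (j, y) lying in the same connected component satisfy P(X_i = x) = P(X_j = y). -/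

import Mathlib

open Finset

/-- Shannon entropy (natural log) of the random variable `X : Ω → S`
under the probability mass function `p : Ω → ℝ`. -/
noncomputable def Hent {Ω S : Type} [Fintype Ω] [DecidableEq S]
    (p : Ω → ℝ) (X : Ω → S) : ℝ :=
  ∑ s ∈ Finset.univ.image X,
    Real.negMulLog (∑ ω ∈ Finset.univ.filter (fun ω => X ω = s), p ω)

/-- The joint random variable `(X_i)_{i ∈ A}`. -/
def joint {Ω : Type} {n : ℕ} (X : Fin n → Ω → ℕ) (A : Finset (Fin n)) :
    Ω → (A → ℕ) :=
  fun ω i => X i ω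

/-- A set function `h : 2^{N_n} → ℝ` is entropic if it is the entropy function of
some random vector `(X_1, …, X_n)` on a finite probability space. -/
def IsEntropic {n : ℕ} (h : Finset (Fin n) → ℝ) : Prop :=
  ∃ (N : ℕ) (p : Fin N → ℝ) (X : Fin n → Fin N → ℕ),
    (∀ ω, 0 ≤ p ω) ∧ (∑ ω, p ω) = 1 ∧
    ∀ A : Finset (Fin n), h A = Hent p (joint X A)

/-- The polymatroidal region Γ_n. -/
def PolymatroidRegion (n : ℕ) : Set (Finset (Fin n) → ℝ) :=
  {h | h ∅ = 0 ∧ (∀ A, 0 ≤ h A) ∧ (∀ A B, A ⊆ B → h A ≤ h B) ∧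
       (∀ A B, h (A ∩ B) + h (A ∪ B) ≤ h A + h B)}

/-- A nonzero `h ∈ Γ_n` spans an extreme ray of `Γ_n` if whenever `h₁, h₂ ∈ Γ_n` and
`h₁ + h₂` is a nonnegative multiple of `h`, both `h₁` and `h₂` are nonnegative
multiples of `h`. -/
def SpansExtremeRay {n : ℕ} (h : Finset (Fin n) → ℝ) : Prop :=
  h ∈ PolymatroidRegion n ∧ h ≠ 0 ∧
  ∀ h₁ h₂ : Finset (Fin n) → ℝ, h₁ ∈ PolymatroidRegion n → h₂ ∈ PolymatroidRegion n →
    (∃ c : ℝ, 0 ≤ c ∧ h₁ + h₂ = c • h) →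
    (∃ c₁ : ℝ, 0 ≤ c₁ ∧ h₁ = c₁ • h) ∧ (∃ c₂ : ℝ, 0 ≤ c₂ ∧ h₂ = c₂ • h)

/-- `F ⊆ Γ_n` is a face of `Γ_n` if whenever `h₁, h₂ ∈ Γ_n` and `h₁ + h₂ ∈ F`,
both `h₁` and `h₂` lie in `F`. -/
def IsFace (n : ℕ) (F : Set (Finset (Fin n) → ℝ)) : Prop :=
  F ⊆ PolymatroidRegion n ∧
  ∀ h₁ h₂ : Finset (Fin n) → ℝ, h₁ ∈ PolymatroidRegion n → h₂ ∈ PolymatroidRegion n →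
    h₁ + h₂ ∈ F → h₁ ∈ F ∧ h₂ ∈ F

/-- A matroid on ground set `N_n`, given by its rank function. -/
structure MatroidRk (n : ℕ) where
  r : Finset (Fin n) → ℕ
  le_card : ∀ A, r A ≤ A.card
  mono : ∀ ⦃A B : Finset (Fin n)⦄, A ⊆ B → r A ≤ r B
  submod : ∀ A B : Finset (Fin n), r (A ∩ B) + r (A ∪ B) ≤ r A + r B

/-- The rank function of a matroid, viewed as a real-valued set function. -/
def MatroidRk.rr {n : ℕ} (M : MatroidRk n) : Finset (Fin n) → ℝ :=
  fun A => (M.r A : ℝ)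

/-- A set is independent if its rank equals its cardinality. -/
def MatroidRk.Indep {n : ℕ} (M : MatroidRk n) (A : Finset (Fin n)) : Prop :=
  M.r A = A.card

/-- A circuit is a minimal dependent set. -/
def MatroidRk.IsCircuit {n : ℕ} (M : MatroidRk n) (C : Finset (Fin n)) : Prop :=
  ¬ M.Indep C ∧ ∀ A ⊂ C, M.Indep A

/-- An element is a loop if its rank is zero. -/
def MatroidRk.IsLoop {n : ℕ} (M : MatroidRk n) (e : Fin n) : Prop :=
  M.r {e} = 0

/-- Two distinct elements are parallel if each has rank one and together they have rank one. -/
def MatroidRk.Parallel {n : ℕ} (M : MatroidRk n) (e f : Fin n) : Prop :=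
  e ≠ f ∧ M.r {e} = 1 ∧ M.r {f} = 1 ∧ M.r {e, f} = 1

/-- The subset `{1, …, k}` of `N_n` (in `Fin n`, the elements with value `< k`). -/
def alphaSet (n k : ℕ) : Finset (Fin n) :=
  Finset.univ.filter (fun i => (i : ℕ) < k)

/-- The rank function of the rank-one matroid `U_{1,k}^n`:
`A ↦ 1` if `A ∩ {1, …, k} ≠ ∅` and `0` otherwise. -/
def rUone (n k : ℕ) : Finset (Fin n) → ℝ :=
  fun A => if (A ∩ alphaSet n k).Nonempty then 1 else 0

/-- The rank function of the uniform matroid `U_{n-1,n}`: `A ↦ min (n-1) |A|`. -/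
def rUnif (n : ℕ) : Finset (Fin n) → ℝ :=
  fun A => ((min (n - 1) A.card : ℕ) : ℝ)

/-- The p-characteristic set `χ_M` of a matroid `M`. -/
def chi {n : ℕ} (M : MatroidRk n) : Set ℤ :=
  {v | 2 ≤ v ∧ IsEntropic (fun A => Real.log (v : ℝ) * M.rr A)}

/-- under the modular entropy equalities and the uniformity condition, all
supports have the same cardinality and within a connected component all vertex
probabilities coincide. -/
theorem stmt13 (m : ℕ) (hm : 2 ≤ m) (Ω : Type) [Fintype Ω]
    (p : Ω → ℝ) (hp0 : ∀ ω, 0 ≤ p ω) (hp1 : ∑ ω, p ω = 1)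
    (X : Fin m → Ω → ℕ)
    (hmod : ∀ i j : Fin m, i ≠ j → ∀ K : Finset (Fin m), i ∉ K → j ∉ K →
      Hent p (joint X (insert i K)) + Hent p (joint X (insert j K)) =
        Hent p (joint X K) + Hent p (joint X (insert i (insert j K))))
    (hunif : ∀ f : Fin m → ℕ,
      0 < ∑ ω ∈ Finset.univ.filter (fun ω => ∀ i, X i ω = f i), p ω →
      ∀ i j : Fin m,
        (∑ ω ∈ Finset.univ.filter (fun ω => X i ω = f i), p ω) =
        (∑ ω ∈ Finset.univ.filter (fun ω => X j ω = f j), p ω)) :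
    (∀ i j : Fin m,
      ((Finset.univ.image (X i)).filter
        (fun x => 0 < ∑ ω ∈ Finset.univ.filter (fun ω => X i ω = x), p ω)).card =
      ((Finset.univ.image (X j)).filter
        (fun x => 0 < ∑ ω ∈ Finset.univ.filter (fun ω => X j ω = x), p ω)).card) ∧
    (∀ i j : Fin m, ∀ x y : ℕ,
      0 < (∑ ω ∈ Finset.univ.filter (fun ω => X i ω = x), p ω) →
      0 < (∑ ω ∈ Finset.univ.filter (fun ω => X j ω = y), p ω) →
      Relation.ReflTransGen
        (fun (u w : Fin m × ℕ) => u.1 ≠ w.1 ∧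
          0 < ∑ ω ∈ Finset.univ.filter (fun ω => X u.1 ω = u.2 ∧ X w.1 ω = w.2), p ω)
        (i, x) (j, y) →
      (∑ ω ∈ Finset.univ.filter (fun ω => X i ω = x), p ω) =
      (∑ ω ∈ Finset.univ.filter (fun ω => X j ω = y), p ω)) := by
  classical
  have hq0 : ∀ (i : Fin m) (x : ℕ),
      0 ≤ ∑ ω ∈ Finset.univ.filter (fun ω => X i ω = x), p ω :=
    fun i x => Finset.sum_nonneg fun ω _ => hp0 ω
  have hw0 : ∀ (i j : Fin m) (x y : ℕ),
      0 ≤ ∑ ω ∈ Finset.univ.filter (fun ω => X i ω = x ∧ X j ω = y), p ω :=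
    fun i j x y => Finset.sum_nonneg fun ω _ => hp0 ω
  -- the edge lemma: adjacent vertices have equal marginal probabilities
  have hedge : ∀ (i j : Fin m), i ≠ j → ∀ (x y : ℕ),
      0 < (∑ ω ∈ Finset.univ.filter (fun ω => X i ω = x ∧ X j ω = y), p ω) →
      (∑ ω ∈ Finset.univ.filter (fun ω => X i ω = x), p ω) =
      (∑ ω ∈ Finset.univ.filter (fun ω => X j ω = y), p ω) := by
    intro i j hij x y hpos
    obtain ⟨ω, hωmem, hωne⟩ := Finset.exists_ne_zero_of_sum_ne_zero (ne_of_gt hpos)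
    simp only [Finset.mem_filter, Finset.mem_univ, true_and] at hωmem
    have hpω : 0 < p ω := lt_of_le_of_ne (hp0 ω) (Ne.symm hωne)
    have hfull : 0 < ∑ ω' ∈ Finset.univ.filter (fun ω' => ∀ k, X k ω' = X k ω), p ω' := by
      have hmem : ω ∈ Finset.univ.filter (fun ω' => ∀ k, X k ω' = X k ω) := by simp
      calc (0:ℝ) < p ω := hpω
        _ ≤ _ := Finset.single_le_sum (fun a _ => hp0 a) hmem
    have h := hunif (fun k => X k ω) hfull i j
    rw [hωmem.1, hωmem.2] at h
    exact h
  -- row sums: summing the joint over the support of X_j gives the marginal of X_i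
  have hfib : ∀ (i j : Fin m) (x : ℕ),
      ∑ y ∈ Finset.univ.image (X j),
        (∑ ω ∈ Finset.univ.filter (fun ω => X i ω = x ∧ X j ω = y), p ω) =
      ∑ ω ∈ Finset.univ.filter (fun ω => X i ω = x), p ω := by
    intro i j x
    rw [← Finset.sum_fiberwise_of_maps_to (g := X j) (t := Finset.univ.image (X j))
      (fun ω _ => Finset.mem_image_of_mem _ (Finset.mem_univ ω)) p]
    apply Finset.sum_congr rfl
    intro y _
    rw [Finset.filter_filter]
  have hrow : ∀ (i j : Fin m) (x : ℕ),
      ∑ y ∈ (Finset.univ.image (X j)).filter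
          (fun y => 0 < ∑ ω ∈ Finset.univ.filter (fun ω => X j ω = y), p ω),
        (∑ ω ∈ Finset.univ.filter (fun ω => X i ω = x ∧ X j ω = y), p ω) =
      ∑ ω ∈ Finset.univ.filter (fun ω => X i ω = x), p ω := by
    intro i j x
    rw [← hfib i j x]
    apply Finset.sum_subset (Finset.filter_subset _ _)
    intro y hyimg hy
    have hqy0 : (∑ ω ∈ Finset.univ.filter (fun ω => X j ω = y), p ω) = 0 := by
      by_contra hne
      exact hy (Finset.mem_filter.mpr ⟨hyimg, lt_of_le_of_ne (hq0 j y) (Ne.symm hne)⟩)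
    have hle : (∑ ω ∈ Finset.univ.filter (fun ω => X i ω = x ∧ X j ω = y), p ω) ≤
        (∑ ω ∈ Finset.univ.filter (fun ω => X j ω = y), p ω) := by
      apply Finset.sum_le_sum_of_subset_of_nonneg
      · intro ω hω
        simp only [Finset.mem_filter, Finset.mem_univ, true_and] at hω ⊢
        exact hω.2
      · intro ω _ _; exact hp0 ω
    exact le_antisymm (hqy0 ▸ hle) (hw0 i j x y)
  -- column sums
  have hcol : ∀ (i j : Fin m) (y : ℕ),
      ∑ x ∈ (Finset.univ.image (X i)).filter
          (fun x => 0 < ∑ ω ∈ Finset.univ.filter (fun ω => X i ω = x), p ω),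
        (∑ ω ∈ Finset.univ.filter (fun ω => X i ω = x ∧ X j ω = y), p ω) =
      ∑ ω ∈ Finset.univ.filter (fun ω => X j ω = y), p ω := by
    intro i j y
    have := hrow j i y
    rw [← this]
    apply Finset.sum_congr rfl
    intro x _
    apply Finset.sum_congr _ (fun _ _ => rfl)
    apply Finset.filter_congr
    intro ω _
    exact ⟨fun h => by simp [h.1, h.2], fun h => by simp [h.1, h.2]⟩
  constructor
  · -- equal cardinalities
    intro i j
    by_cases hij : i = j
    · subst hij; rfl
    set Si := (Finset.univ.image (X i)).filter
      (fun x => 0 < ∑ ω ∈ Finset.univ.filter (fun ω => X i ω = x), p ω) with hSi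
    set Sj := (Finset.univ.image (X j)).filter
      (fun y => 0 < ∑ ω ∈ Finset.univ.filter (fun ω => X j ω = y), p ω) with hSj
    have key : ((Si.card : ℝ)) = ((Sj.card : ℝ)) := by
      have h1 : (Si.card : ℝ) = ∑ x ∈ Si, (1:ℝ) := by
        rw [Finset.sum_const, nsmul_eq_mul, mul_one]
      have h2 : (Sj.card : ℝ) = ∑ y ∈ Sj, (1:ℝ) := by
        rw [Finset.sum_const, nsmul_eq_mul, mul_one]
      rw [h1, h2]
      calc ∑ x ∈ Si, (1:ℝ)
          = ∑ x ∈ Si, ∑ y ∈ Sj,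
              (∑ ω ∈ Finset.univ.filter (fun ω => X i ω = x ∧ X j ω = y), p ω) /
              (∑ ω ∈ Finset.univ.filter (fun ω => X i ω = x), p ω) := by
            apply Finset.sum_congr rfl
            intro x hx
            rw [hSi, Finset.mem_filter] at hx
            rw [← Finset.sum_div, hrow i j x, div_self (ne_of_gt hx.2)]
        _ = ∑ x ∈ Si, ∑ y ∈ Sj,
              (∑ ω ∈ Finset.univ.filter (fun ω => X i ω = x ∧ X j ω = y), p ω) /
              (∑ ω ∈ Finset.univ.filter (fun ω => X j ω = y), p ω) := by
            apply Finset.sum_congr rfl; intro x _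
            apply Finset.sum_congr rfl; intro y _
            rcases eq_or_lt_of_le (hw0 i j x y) with h0 | hpos
            · rw [← h0]; simp
            · rw [hedge i j hij x y hpos]
        _ = ∑ y ∈ Sj, ∑ x ∈ Si,
              (∑ ω ∈ Finset.univ.filter (fun ω => X i ω = x ∧ X j ω = y), p ω) /
              (∑ ω ∈ Finset.univ.filter (fun ω => X j ω = y), p ω) := Finset.sum_comm
        _ = ∑ y ∈ Sj, (1:ℝ) := by
            apply Finset.sum_congr rfl
            intro y hy
            rw [hSj, Finset.mem_filter] at hy
            rw [← Finset.sum_div, hcol i j y, div_self (ne_of_gt hy.2)]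
    exact_mod_cast key
  · -- equal probabilities within connected components
    have hchain : ∀ a b : Fin m × ℕ,
        Relation.ReflTransGen
          (fun (u w : Fin m × ℕ) => u.1 ≠ w.1 ∧
            0 < ∑ ω ∈ Finset.univ.filter (fun ω => X u.1 ω = u.2 ∧ X w.1 ω = w.2), p ω)
          a b →
        (∑ ω ∈ Finset.univ.filter (fun ω => X a.1 ω = a.2), p ω) =
        (∑ ω ∈ Finset.univ.filter (fun ω => X b.1 ω = b.2), p ω) := by
      intro a b h
      induction h with
      | refl => rfl
      | tail _ hbc ih =>
        rename_i u w _
        exact ih.trans (hedge u.1 w.1 hbc.1 u.2 w.2 hbc.2)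
    intro i j x y _ _ hrel
    exact hchain (i, x) (j, y) hrel
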